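/- arXiv:2601.18588 — 2 statements merged into one kernel-verified Lean document; each statement's English description precedes it below -/
import Mathlib

section
/- The softmax function σ: ℝ^d → ℝ^d defined by σ(u)_i = exp(u_i)/Σ_k exp(u_k) is 1-Lipschitz with respect to the Euclidean norm: for all u, v ∈ ℝ^d, ‖σ(u) − σ(v)‖ ≤ ‖u − v‖. -/
/-- The softmax map on `ℝ^d`. -/
noncomputable def softmax {d : ℕ} (u : EuclideanSpace ℝ (Fin d)) :
    EuclideanSpace ℝ (Fin d) :=
  WithLp.toLp 2 (fun i => Real.exp (u i) / ∑ k, Real.exp (u k))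

namespace SoftmaxAux

variable {d : ℕ}

noncomputable def S (x : EuclideanSpace ℝ (Fin d)) : ℝ := ∑ k, Real.exp (x k)

noncomputable def p (x : EuclideanSpace ℝ (Fin d)) (i : Fin d) : ℝ := Real.exp (x i) / S x

lemma S_pos (hd : 0 < d) (x : EuclideanSpace ℝ (Fin d)) : 0 < S x := by
  haveI : Nonempty (Fin d) := Fin.pos_iff_nonempty.mp hd
  exact Finset.sum_pos (fun _ _ => Real.exp_pos _) Finset.univ_nonempty

lemma p_nonneg (hd : 0 < d) (x : EuclideanSpace ℝ (Fin d)) (i : Fin d) : 0 ≤ p x i :=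
  div_nonneg (Real.exp_pos _).le (S_pos hd x).le

lemma p_le_one (hd : 0 < d) (x : EuclideanSpace ℝ (Fin d)) (i : Fin d) : p x i ≤ 1 := by
  rw [p, div_le_one (S_pos hd x)]
  exact Finset.single_le_sum (f := fun k => Real.exp (x k))
    (fun k _ => (Real.exp_pos _).le) (Finset.mem_univ i)

lemma sum_p (hd : 0 < d) (x : EuclideanSpace ℝ (Fin d)) : ∑ i, p x i = 1 := by
  simp only [p]
  rw [← Finset.sum_div]
  exact div_self (S_pos hd x).ne'

/-- The Jacobian of softmax at `x`, as a continuous linear map. -/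
noncomputable def D (x : EuclideanSpace ℝ (Fin d)) :
    EuclideanSpace ℝ (Fin d) →L[ℝ] EuclideanSpace ℝ (Fin d) :=
  ((EuclideanSpace.equiv (Fin d) ℝ).symm : (Fin d → ℝ) →L[ℝ] EuclideanSpace ℝ (Fin d)).comp
    (ContinuousLinearMap.pi fun i =>
      p x i • (EuclideanSpace.proj i - ∑ k, p x k • EuclideanSpace.proj k))

lemma D_apply (x h : EuclideanSpace ℝ (Fin d)) (i : Fin d) :
    D x h i = p x i * (h i - ∑ k, p x k * h k) := by
  simp [D, ContinuousLinearMap.sum_apply]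

lemma hasFDerivAt_softmax (hd : 0 < d) (x : EuclideanSpace ℝ (Fin d)) :
    HasFDerivAt softmax (D x) x := by
  have hG : HasFDerivAt (fun u : EuclideanSpace ℝ (Fin d) => fun i => Real.exp (u i) / S u)
      (ContinuousLinearMap.pi fun i =>
        p x i • (EuclideanSpace.proj (𝕜 := ℝ) i - ∑ k, p x k • EuclideanSpace.proj k)) x := by
    apply hasFDerivAt_pi''
    intro i
    have hnum : ∀ j : Fin d, HasFDerivAt (fun u : EuclideanSpace ℝ (Fin d) => Real.exp (u j))
        (Real.exp (x j) • EuclideanSpace.proj (𝕜 := ℝ) j) x := by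
      intro j
      have hproj : HasFDerivAt (fun u : EuclideanSpace ℝ (Fin d) => u j)
          (EuclideanSpace.proj (𝕜 := ℝ) j) x := (EuclideanSpace.proj (𝕜 := ℝ) j).hasFDerivAt
      exact (Real.hasDerivAt_exp (x j)).comp_hasFDerivAt x hproj
    have hS : HasFDerivAt S (∑ k, Real.exp (x k) • EuclideanSpace.proj (𝕜 := ℝ) k) x := by
      exact HasFDerivAt.fun_sum (fun k _ => hnum k)
    have hSne := (S_pos hd x).ne'
    have hinv : HasFDerivAt (fun u : EuclideanSpace ℝ (Fin d) => (S u)⁻¹)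
        ((-((S x) ^ 2)⁻¹) • (∑ k, Real.exp (x k) • EuclideanSpace.proj (𝕜 := ℝ) k)) x :=
      (hasDerivAt_inv hSne).comp_hasFDerivAt x hS
    have hmul := (hnum i).mul hinv
    have heq : (fun u : EuclideanSpace ℝ (Fin d) => Real.exp (u i) / S u)
        = fun u => Real.exp (u i) * (S u)⁻¹ := by
      funext u; rw [div_eq_mul_inv]
    rw [heq]
    refine hmul.congr_fderiv ?_
    ext h
    simp only [ContinuousLinearMap.proj_pi, ContinuousLinearMap.smul_apply,
      ContinuousLinearMap.add_apply, ContinuousLinearMap.sub_apply,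
      ContinuousLinearMap.sum_apply, PiLp.proj_apply,
      ContinuousLinearMap.coe_smul', Pi.smul_apply, smul_eq_mul, p]
    have hsum : ∑ k, Real.exp (x k) / S x * h k = (∑ k, Real.exp (x k) * h k) / S x := by
      rw [Finset.sum_div]; exact Finset.sum_congr rfl fun k _ => by ring
    rw [hsum]
    field_simp
    ring
  exact ((EuclideanSpace.equiv (Fin d) ℝ).symm.hasFDerivAt).comp x hG

lemma norm_D_le (hd : 0 < d) (x : EuclideanSpace ℝ (Fin d)) : ‖D x‖ ≤ 1 := by
  refine ContinuousLinearMap.opNorm_le_bound _ zero_le_one (fun h => ?_)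
  rw [one_mul]
  rw [EuclideanSpace.norm_eq, EuclideanSpace.norm_eq]
  apply Real.sqrt_le_sqrt
  set m := ∑ k, p x k * h k with hm
  have key : ∑ i, (p x i * (h i - m)) ^ 2 ≤ ∑ i, (h i) ^ 2 := by
    have h1 : ∑ i, (p x i * (h i - m)) ^ 2 ≤ ∑ i, p x i * (h i - m) ^ 2 := by
      apply Finset.sum_le_sum
      intro i _
      rw [mul_pow]
      apply mul_le_mul_of_nonneg_right _ (sq_nonneg _)
      calc p x i ^ 2 ≤ p x i * 1 := by
            rw [sq]; exact mul_le_mul_of_nonneg_left (p_le_one hd x i) (p_nonneg hd x i)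
        _ = p x i := mul_one _
    have h2 : ∑ i, p x i * (h i - m) ^ 2 = (∑ i, p x i * (h i) ^ 2) - m ^ 2 := by
      have expand : ∀ i : Fin d, p x i * (h i - m) ^ 2
          = p x i * (h i) ^ 2 - 2 * m * (p x i * h i) + m ^ 2 * p x i := by
        intro i; ring
      rw [Finset.sum_congr rfl (fun i _ => expand i)]
      rw [Finset.sum_add_distrib, Finset.sum_sub_distrib, ← Finset.mul_sum, ← Finset.mul_sum,
        sum_p hd x, ← hm]
      ring
    have h3 : (∑ i, p x i * (h i) ^ 2) - m ^ 2 ≤ ∑ i, p x i * (h i) ^ 2 := by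
      nlinarith [sq_nonneg m]
    have h4 : ∑ i, p x i * (h i) ^ 2 ≤ ∑ i, (h i) ^ 2 := by
      apply Finset.sum_le_sum
      intro i _
      calc p x i * (h i) ^ 2 ≤ 1 * (h i) ^ 2 :=
            mul_le_mul_of_nonneg_right (p_le_one hd x i) (sq_nonneg _)
        _ = (h i) ^ 2 := one_mul _
    linarith
  calc ∑ i, ‖D x h i‖ ^ 2 = ∑ i, (p x i * (h i - m)) ^ 2 := by
        refine Finset.sum_congr rfl (fun i _ => ?_)
        rw [D_apply, Real.norm_eq_abs, sq_abs, hm]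
    _ ≤ ∑ i, (h i) ^ 2 := key
    _ = ∑ i, ‖h i‖ ^ 2 := by
        refine Finset.sum_congr rfl (fun i _ => ?_)
        rw [Real.norm_eq_abs, sq_abs]

end SoftmaxAux

theorem stmt8 {d : ℕ} (u v : EuclideanSpace ℝ (Fin d)) :
    ‖softmax u - softmax v‖ ≤ ‖u - v‖ := by
  rcases Nat.eq_zero_or_pos d with hd | hd
  · subst hd
    have : softmax u = softmax v := Subsingleton.elim _ _
    rw [this, sub_self, norm_zero]
    exact norm_nonneg _
  · have := convex_univ.norm_image_sub_le_of_norm_hasFDerivWithin_le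
      (f := softmax) (f' := SoftmaxAux.D) (C := 1) (s := (Set.univ : Set (EuclideanSpace ℝ (Fin d))))
      (fun x _ => (SoftmaxAux.hasFDerivAt_softmax hd x).hasFDerivWithinAt)
      (fun x _ => SoftmaxAux.norm_D_le hd x) (Set.mem_univ v) (Set.mem_univ u)
    simpa using this
end

section
/- Lipschitz continuity of self-attention: Let A(X) = softmax(XW_Q(XW_K)^T/√d_k)·XW_V where softmax is applied row-wise. Assume ‖W_Q‖ ≤ B_Q, ‖W_K‖ ≤ B_K, ‖W_V‖ ≤ B_V (operator norms), and inputs satisfy ‖X‖ ≤ B_X. Then for any X₁, X₂ with ‖X_i‖ ≤ B_X, ‖A(X₁) − A(X₂)‖ ≤ (B_V + (B_X B_V)·(2·B_X B_Q B_K)/√d_k)·‖X₁ − X₂‖. -/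
open Matrix

attribute [local instance] Matrix.frobeniusNormedAddCommGroup

/-- Row-wise softmax of a matrix. -/
noncomputable def softmaxRows {n m : ℕ} (M : Matrix (Fin n) (Fin m) ℝ) :
    Matrix (Fin n) (Fin m) ℝ :=
  fun i j => Real.exp (M i j) / ∑ k, Real.exp (M i k)

/-- Self-attention map. -/
noncomputable def attention {n d dk dv : ℕ}
    (Wq Wk : Matrix (Fin d) (Fin dk) ℝ) (Wv : Matrix (Fin d) (Fin dv) ℝ)
    (X : Matrix (Fin n) (Fin d) ℝ) : Matrix (Fin n) (Fin dv) ℝ :=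
  softmaxRows ((Real.sqrt dk)⁻¹ • ((X * Wq) * (X * Wk)ᵀ)) * (X * Wv)

section Auxiliary

open Finset

/-- The key elementary inequality: for a probability vector `p` and any vector `v`,
`∑ pⱼ²(vⱼ - v̄)² ≤ ¼ ∑ vⱼ²` where `v̄` is the `p`-mean of `v`. -/
private lemma key_ineq {m : ℕ} (p v : Fin m → ℝ) (hp : ∀ j, 0 ≤ p j)
    (hs : ∑ j, p j = 1) :
    ∑ j, (p j * (v j - ∑ k, p k * v k)) ^ 2 ≤ 1 / 4 * ∑ j, v j ^ 2 := by
  have hne : (Finset.univ : Finset (Fin m)).Nonempty := by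
    by_contra h
    rw [Finset.not_nonempty_iff_eq_empty] at h
    rw [h, Finset.sum_empty] at hs; norm_num at hs
  obtain ⟨jM, -, hjM⟩ := Finset.exists_max_image Finset.univ v hne
  obtain ⟨jm, -, hjm⟩ := Finset.exists_min_image Finset.univ v hne
  set M := v jM with hM
  set μ := v jm with hμ
  have hvle : ∀ j, v j ≤ M := fun j => hjM j (Finset.mem_univ j)
  have hvge : ∀ j, μ ≤ v j := fun j => hjm j (Finset.mem_univ j)
  set R := M - μ with hR
  have hR0 : 0 ≤ R := by have := hvge jM; simp only [hR]; linarith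
  set m0 := ∑ k, p k * v k with hm0
  have hp1 : ∀ j, p j ≤ 1 := by
    intro j
    rw [← hs]
    exact Finset.single_le_sum (fun k _ => hp k) (Finset.mem_univ j)
  have hdiff : ∀ j, v j - m0 = ∑ k, p k * (v j - v k) := by
    intro j
    have h1 : ∑ k, p k * (v j - v k) = (∑ k, p k) * v j - ∑ k, p k * v k := by
      rw [Finset.sum_mul, ← Finset.sum_sub_distrib]
      exact Finset.sum_congr rfl (fun k _ => by ring)
    rw [h1, hs, one_mul, hm0]
  have habs : ∀ j, |v j - m0| ≤ (1 - p j) * R := by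
    intro j
    rw [hdiff j]
    calc |∑ k, p k * (v j - v k)| ≤ ∑ k, |p k * (v j - v k)| := Finset.abs_sum_le_sum_abs _ _
      _ ≤ ∑ k, (p k * R - if k = j then p k * R else 0) := by
          apply Finset.sum_le_sum
          intro k _
          rcases eq_or_ne k j with h | h
          · subst h; simp
          · simp only [h, if_false, sub_zero, abs_mul, abs_of_nonneg (hp k)]
            apply mul_le_mul_of_nonneg_left _ (hp k)
            rw [abs_le]
            constructor
            · have := hvle k; have := hvge j; simp only [hR]; linarith
            · have := hvle j; have := hvge k; simp only [hR]; linarith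
      _ = (1 - p j) * R := by
          rw [Finset.sum_sub_distrib, Finset.sum_ite_eq' Finset.univ j (fun k => p k * R),
            ← Finset.sum_mul, hs]
          simp [sub_mul]
  have hw : ∀ j, p j * |v j - m0| ≤ R / 4 := by
    intro j
    calc p j * |v j - m0| ≤ p j * ((1 - p j) * R) :=
          mul_le_mul_of_nonneg_left (habs j) (hp j)
      _ ≤ R / 4 := by nlinarith [mul_nonneg (sq_nonneg (p j - 1/2)) hR0]
  have expand : ∀ c : ℝ, ∑ j, p j * (v j - c) ^ 2
      = (∑ j, p j * v j ^ 2) - 2 * c * m0 + c ^ 2 := by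
    intro c
    have h1 : ∀ j ∈ Finset.univ, p j * (v j - c) ^ 2
        = p j * v j ^ 2 - 2 * c * (p j * v j) + c ^ 2 * p j := fun j _ => by ring
    rw [Finset.sum_congr rfl h1, Finset.sum_add_distrib, Finset.sum_sub_distrib,
      ← Finset.mul_sum, ← Finset.mul_sum, hs, ← hm0, mul_one]
  have hc2 : ∑ j, p j * (v j - (M + μ)/2) ^ 2 ≤ R ^ 2 / 4 := by
    calc ∑ j, p j * (v j - (M + μ)/2) ^ 2 ≤ ∑ j, p j * (R/2) ^ 2 := by
          apply Finset.sum_le_sum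
          intro j _
          apply mul_le_mul_of_nonneg_left _ (hp j)
          exact sq_le_sq' (by have := hvge j; simp only [hR]; linarith)
            (by have := hvle j; simp only [hR]; linarith)
      _ = R ^ 2 / 4 := by rw [← Finset.sum_mul, hs, one_mul]; ring
  have hVar : ∑ j, p j * (v j - m0) ^ 2 ≤ R ^ 2 / 4 := by
    have e1 := expand m0
    have e2 := expand ((M + μ)/2)
    rw [e2] at hc2
    rw [e1]
    nlinarith [sq_nonneg (m0 - (M + μ)/2)]
  have hCS : (∑ j, p j * |v j - m0|) ^ 2 ≤ ∑ j, p j * (v j - m0) ^ 2 := by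
    have h := Finset.sum_mul_sq_le_sq_mul_sq Finset.univ
      (fun j => Real.sqrt (p j)) (fun j => Real.sqrt (p j) * |v j - m0|)
    have e1 : ∀ j ∈ Finset.univ,
        Real.sqrt (p j) * (Real.sqrt (p j) * |v j - m0|) = p j * |v j - m0| := by
      intro j _
      rw [← mul_assoc, Real.mul_self_sqrt (hp j)]
    have e2 : ∀ j ∈ Finset.univ, Real.sqrt (p j) ^ 2 = p j := fun j _ => Real.sq_sqrt (hp j)
    have e3 : ∀ j ∈ Finset.univ,
        (Real.sqrt (p j) * |v j - m0|) ^ 2 = p j * (v j - m0) ^ 2 := by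
      intro j _
      rw [mul_pow, Real.sq_sqrt (hp j), sq_abs]
    rw [Finset.sum_congr rfl e1, Finset.sum_congr rfl e2, Finset.sum_congr rfl e3, hs,
      one_mul] at h
    exact h
  have hsum : ∑ j, p j * |v j - m0| ≤ R / 2 := by
    have h0 : 0 ≤ ∑ j, p j * |v j - m0| :=
      Finset.sum_nonneg (fun j _ => mul_nonneg (hp j) (abs_nonneg _))
    nlinarith [le_trans hCS hVar]
  have hRsq : R ^ 2 ≤ 2 * ∑ j, v j ^ 2 := by
    rcases eq_or_ne jM jm with h | h
    · have : R = 0 := by simp only [hR, hM, hμ, h, sub_self]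
      rw [this]
      nlinarith [Finset.sum_nonneg (fun j (_ : j ∈ Finset.univ) => sq_nonneg (v j))]
    · have hpair : v jM ^ 2 + v jm ^ 2 ≤ ∑ j, v j ^ 2 := by
        have hsub := Finset.sum_le_sum_of_subset_of_nonneg
          (Finset.subset_univ ({jM, jm} : Finset (Fin m)))
          (fun i _ _ => sq_nonneg (v i))
        rwa [Finset.sum_pair h] at hsub
      simp only [hR, hM, hμ]
      nlinarith [hpair, sq_nonneg (v jM + v jm)]
  have hterm : ∀ j ∈ Finset.univ,
      (p j * (v j - m0)) ^ 2 ≤ R / 4 * (p j * |v j - m0|) := by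
    intro j _
    have h1 : (p j * (v j - m0)) ^ 2 = (p j * |v j - m0|) ^ 2 := by
      rw [← sq_abs (p j * (v j - m0)), abs_mul, abs_of_nonneg (hp j)]
    rw [h1, sq]
    exact mul_le_mul_of_nonneg_right (hw j) (mul_nonneg (hp j) (abs_nonneg _))
  calc ∑ j, (p j * (v j - m0)) ^ 2 ≤ ∑ j, R / 4 * (p j * |v j - m0|) :=
        Finset.sum_le_sum hterm
    _ = R / 4 * ∑ j, p j * |v j - m0| := by rw [← Finset.mul_sum]
    _ ≤ R / 4 * (R / 2) := mul_le_mul_of_nonneg_left hsum (by positivity)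
    _ ≤ 1 / 4 * ∑ j, v j ^ 2 := by nlinarith [hRsq]

/-- Softmax (as a map on vectors) is `1/2`-Lipschitz in the Euclidean norm, squared form. -/
private lemma softmax_vec {m : ℕ} (s r : Fin m → ℝ) :
    ∑ j, (Real.exp (s j) / (∑ k, Real.exp (s k))
        - Real.exp (r j) / (∑ k, Real.exp (r k))) ^ 2
      ≤ 1 / 4 * ∑ j, (s j - r j) ^ 2 := by
  rcases Nat.eq_zero_or_pos m with hm | hm
  · subst hm; simp
  haveI : NeZero m := ⟨hm.ne'⟩
  set δ : Fin m → ℝ := fun j => s j - r j with hδ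
  have hD : ∀ t : ℝ, 0 < ∑ k, Real.exp (r k + t * δ k) := fun t =>
    Finset.sum_pos (fun k _ => Real.exp_pos _) Finset.univ_nonempty
  set g0 : ℝ → (Fin m → ℝ) :=
    fun t j => Real.exp (r j + t * δ j) / ∑ k, Real.exp (r k + t * δ k) with hg0
  set w : ℝ → (Fin m → ℝ) :=
    fun t j => g0 t j * (δ j - ∑ k, g0 t k * δ k) with hww
  have hexp : ∀ (t : ℝ) (j : Fin m), HasDerivAt (fun t : ℝ => Real.exp (r j + t * δ j))
      (Real.exp (r j + t * δ j) * δ j) t := by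
    intro t j
    exact (((hasDerivAt_mul_const (δ j)).const_add (r j)).exp)
  have hderiv : ∀ t : ℝ, HasDerivAt g0 (w t) t := by
    intro t
    rw [hasDerivAt_pi]
    intro j
    have hDen : HasDerivAt (fun t : ℝ => ∑ k, Real.exp (r k + t * δ k))
        (∑ k, Real.exp (r k + t * δ k) * δ k) t :=
      HasDerivAt.fun_sum (fun k _ => hexp t k)
    have hd := (hexp t j).div hDen (hD t).ne'
    have hkey : w t j = (Real.exp (r j + t * δ j) * δ j * (∑ k, Real.exp (r k + t * δ k))
        - Real.exp (r j + t * δ j) * ∑ k, Real.exp (r k + t * δ k) * δ k)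
        / (∑ k, Real.exp (r k + t * δ k)) ^ 2 := by
      have hsum : ∑ k, g0 t k * δ k
          = (∑ k, Real.exp (r k + t * δ k) * δ k) / (∑ k, Real.exp (r k + t * δ k)) := by
        rw [Finset.sum_div]
        exact Finset.sum_congr rfl (fun k _ => by rw [hg0]; ring)
      rw [hww]
      simp only [hg0]
      rw [hsum]
      field_simp
    rw [hkey]
    exact hd
  set e := (PiLp.continuousLinearEquiv 2 ℝ (fun _ : Fin m => ℝ)).symm with he
  have hgE : ∀ t : ℝ, HasDerivAt (fun t => e (g0 t)) (e (w t)) t := by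
    intro t
    exact (e.toContinuousLinearMap.hasFDerivAt).comp_hasDerivAt t (hderiv t)
  have hC0 : (0:ℝ) ≤ 1 / 4 * ∑ j, δ j ^ 2 := by positivity
  have key := norm_image_sub_le_of_norm_deriv_le_segment_01'
    (f := fun t => e (g0 t)) (f' := fun t => e (w t))
    (C := Real.sqrt (1 / 4 * ∑ j, δ j ^ 2))
    (fun t _ => (hgE t).hasDerivWithinAt)
    ?_
  · have h10 : e (g0 1) - e (g0 0) = e (g0 1 - g0 0) := by rw [map_sub]
    rw [h10, EuclideanSpace.norm_eq] at key
    have harg : ∀ j, ‖(e (g0 1 - g0 0)) j‖ ^ 2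
        = (Real.exp (s j) / (∑ k, Real.exp (s k))
          - Real.exp (r j) / (∑ k, Real.exp (r k))) ^ 2 := by
      intro j
      have h1 : (e (g0 1 - g0 0)) j = g0 1 j - g0 0 j := rfl
      rw [h1, Real.norm_eq_abs, sq_abs]
      congr 2 <;> · rw [hg0] <;> norm_num <;> simp [hδ]
    have hsum : ∑ j, ‖(e (g0 1 - g0 0)) j‖ ^ 2
        = ∑ j, (Real.exp (s j) / (∑ k, Real.exp (s k))
          - Real.exp (r j) / (∑ k, Real.exp (r k))) ^ 2 :=
      Finset.sum_congr rfl (fun j _ => harg j)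
    rw [hsum] at key
    have h2 := mul_self_le_mul_self (Real.sqrt_nonneg _) key
    rw [Real.mul_self_sqrt (Finset.sum_nonneg (fun j _ => sq_nonneg _)),
      Real.mul_self_sqrt hC0] at h2
    exact h2
  · intro t _
    rw [EuclideanSpace.norm_eq]
    apply Real.sqrt_le_sqrt
    have hap : ∀ j, ‖(e (w t)) j‖ ^ 2 = (w t j) ^ 2 := by
      intro j
      rw [Real.norm_eq_abs, sq_abs]
      rfl
    rw [Finset.sum_congr rfl (fun j _ => hap j)]
    exact key_ineq (g0 t) δ
      (fun j => div_nonneg (Real.exp_pos _).le (hD t).le)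
      (by rw [hg0]; rw [← Finset.sum_div, div_self (hD t).ne'])

private lemma frob_sqrt {a b : ℕ} (A : Matrix (Fin a) (Fin b) ℝ) :
    ‖A‖ = Real.sqrt (∑ i, ∑ j, (A i j) ^ 2) := by
  rw [Matrix.frobenius_norm_def, Real.sqrt_eq_rpow]
  congr 1
  apply Finset.sum_congr rfl
  intro i _
  apply Finset.sum_congr rfl
  intro j _
  rw [Real.norm_eq_abs, show ((2:ℝ)) = ((2:ℕ):ℝ) by norm_num, Real.rpow_natCast, sq_abs]

private lemma frob_smul {a b : ℕ} (c : ℝ) (A : Matrix (Fin a) (Fin b) ℝ) :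
    ‖c • A‖ = |c| * ‖A‖ := by
  rw [frob_sqrt, frob_sqrt]
  have h1 : ∑ i, ∑ j, ((c • A) i j) ^ 2 = c ^ 2 * ∑ i, ∑ j, (A i j) ^ 2 := by
    rw [Finset.mul_sum]
    apply Finset.sum_congr rfl
    intro i _
    rw [Finset.mul_sum]
    apply Finset.sum_congr rfl
    intro j _
    simp [Matrix.smul_apply, smul_eq_mul]
    ring
  rw [h1, Real.sqrt_mul (sq_nonneg c), Real.sqrt_sq_eq_abs]

/-- Row-wise softmax is `1/2`-Lipschitz in the Frobenius norm. -/
private lemma softmaxRows_lip {n m : ℕ} (A B : Matrix (Fin n) (Fin m) ℝ) :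
    ‖softmaxRows A - softmaxRows B‖ ≤ 1 / 2 * ‖A - B‖ := by
  rw [frob_sqrt, frob_sqrt]
  have h1 : ∑ i, ∑ j, ((softmaxRows A - softmaxRows B) i j) ^ 2
      ≤ 1 / 4 * ∑ i, ∑ j, ((A - B) i j) ^ 2 := by
    rw [Finset.mul_sum]
    apply Finset.sum_le_sum
    intro i _
    have := softmax_vec (A i) (B i)
    simpa [Matrix.sub_apply, softmaxRows] using this
  calc Real.sqrt (∑ i, ∑ j, ((softmaxRows A - softmaxRows B) i j) ^ 2)
      ≤ Real.sqrt (1 / 4 * ∑ i, ∑ j, ((A - B) i j) ^ 2) := Real.sqrt_le_sqrt h1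
    _ = 1 / 2 * Real.sqrt (∑ i, ∑ j, ((A - B) i j) ^ 2) := by
        rw [show (1/4 : ℝ) = (1/2)^2 by norm_num, Real.sqrt_mul (sq_nonneg _),
          Real.sqrt_sq (by norm_num : (0:ℝ) ≤ 1/2)]

/-- Multiplication by the uniform row-stochastic matrix does not increase the Frobenius norm. -/
private lemma uniform_mul {n m : ℕ} (M : Matrix (Fin n) (Fin m) ℝ) :
    ‖softmaxRows (0 : Matrix (Fin n) (Fin n) ℝ) * M‖ ≤ ‖M‖ := by
  rcases Nat.eq_zero_or_pos n with hn | hn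
  · subst hn
    rw [frob_sqrt]
    simp
  have hn0 : ((n:ℝ)) ≠ 0 := by positivity
  rw [frob_sqrt, frob_sqrt]
  apply Real.sqrt_le_sqrt
  have hij : ∀ (i : Fin n) (j : Fin m),
      (softmaxRows (0 : Matrix (Fin n) (Fin n) ℝ) * M) i j = (1 / (n:ℝ)) * ∑ k, M k j := by
    intro i j
    rw [Matrix.mul_apply, Finset.mul_sum]
    apply Finset.sum_congr rfl
    intro k _
    simp [softmaxRows, Finset.card_univ]
  calc ∑ i, ∑ j, ((softmaxRows (0 : Matrix (Fin n) (Fin n) ℝ) * M) i j) ^ 2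
      = ∑ i : Fin n, ∑ j, (1 / (n:ℝ)) ^ 2 * (∑ k, M k j) ^ 2 := by
        apply Finset.sum_congr rfl; intro i _
        apply Finset.sum_congr rfl; intro j _
        rw [hij, mul_pow]
    _ ≤ ∑ i : Fin n, ∑ j, (1 / (n:ℝ)) ^ 2 * ((n:ℝ) * ∑ k, (M k j) ^ 2) := by
        apply Finset.sum_le_sum; intro i _
        apply Finset.sum_le_sum; intro j _
        apply mul_le_mul_of_nonneg_left _ (by positivity)
        have h := sq_sum_le_card_mul_sum_sq (s := Finset.univ) (f := fun k => M k j)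
        simpa [Finset.card_univ] using h
    _ = ∑ j, ∑ k, (M k j) ^ 2 := by
        rw [Finset.sum_const, Finset.card_univ, Fintype.card_fin, nsmul_eq_mul,
          Finset.mul_sum]
        apply Finset.sum_congr rfl; intro j _
        field_simp
    _ = ∑ i, ∑ j, (M i j) ^ 2 := Finset.sum_comm

end Auxiliary

set_option maxHeartbeats 1600000 in
theorem stmt14 {n d dk dv : ℕ}
    (Wq Wk : Matrix (Fin d) (Fin dk) ℝ) (Wv : Matrix (Fin d) (Fin dv) ℝ)
    (Bq Bk Bv Bx : ℝ)
    (hWq : ‖Wq‖ ≤ Bq) (hWk : ‖Wk‖ ≤ Bk) (hWv : ‖Wv‖ ≤ Bv)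
    (X₁ X₂ : Matrix (Fin n) (Fin d) ℝ)
    (hX₁ : ‖X₁‖ ≤ Bx) (hX₂ : ‖X₂‖ ≤ Bx) :
    ‖attention Wq Wk Wv X₁ - attention Wq Wk Wv X₂‖ ≤
      (Bv + (Bx * Bv) * (2 * Bx * Bq * Bk) / Real.sqrt dk) * ‖X₁ - X₂‖ := by
  have hBq0 : 0 ≤ Bq := le_trans (norm_nonneg _) hWq
  have hBk0 : 0 ≤ Bk := le_trans (norm_nonneg _) hWk
  have hBv0 : 0 ≤ Bv := le_trans (norm_nonneg _) hWv
  have hBx0 : 0 ≤ Bx := le_trans (norm_nonneg _) hX₁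
  set c : ℝ := (Real.sqrt dk)⁻¹ with hc
  have hc0 : 0 ≤ c := inv_nonneg.mpr (Real.sqrt_nonneg _)
  set Δ := X₁ - X₂ with hΔ
  set S₁ := c • ((X₁ * Wq) * (X₁ * Wk)ᵀ) with hS₁
  set S₂ := c • ((X₂ * Wq) * (X₂ * Wk)ᵀ) with hS₂
  set P₁ := softmaxRows S₁ with hP₁
  set P₂ := softmaxRows S₂ with hP₂
  set U := softmaxRows (0 : Matrix (Fin n) (Fin n) ℝ) with hU
  -- decomposition
  have hdecomp : attention Wq Wk Wv X₁ - attention Wq Wk Wv X₂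
      = U * (Δ * Wv) + ((P₁ - U) * (Δ * Wv) + (P₁ - P₂) * (X₂ * Wv)) := by
    show P₁ * (X₁ * Wv) - P₂ * (X₂ * Wv) = _
    rw [Matrix.sub_mul P₁ U, Matrix.sub_mul P₁ P₂, hΔ, Matrix.sub_mul X₁ X₂ Wv,
      Matrix.mul_sub P₁, Matrix.mul_sub U]
    abel
  -- basic product bounds
  have hX₁Wq : ‖X₁ * Wq‖ ≤ Bx * Bq :=
    le_trans (Matrix.frobenius_norm_mul X₁ Wq)
      (mul_le_mul hX₁ hWq (norm_nonneg _) hBx0)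
  have hX₁Wk : ‖X₁ * Wk‖ ≤ Bx * Bk :=
    le_trans (Matrix.frobenius_norm_mul X₁ Wk)
      (mul_le_mul hX₁ hWk (norm_nonneg _) hBx0)
  have hX₂Wq : ‖X₂ * Wq‖ ≤ Bx * Bq :=
    le_trans (Matrix.frobenius_norm_mul X₂ Wq)
      (mul_le_mul hX₂ hWq (norm_nonneg _) hBx0)
  have hΔWq : ‖Δ * Wq‖ ≤ ‖Δ‖ * Bq :=
    le_trans (Matrix.frobenius_norm_mul Δ Wq)
      (mul_le_mul_of_nonneg_left hWq (norm_nonneg _))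
  have hΔWk : ‖Δ * Wk‖ ≤ ‖Δ‖ * Bk :=
    le_trans (Matrix.frobenius_norm_mul Δ Wk)
      (mul_le_mul_of_nonneg_left hWk (norm_nonneg _))
  have hΔWv : ‖Δ * Wv‖ ≤ ‖Δ‖ * Bv :=
    le_trans (Matrix.frobenius_norm_mul Δ Wv)
      (mul_le_mul_of_nonneg_left hWv (norm_nonneg _))
  have hX₂Wv : ‖X₂ * Wv‖ ≤ Bx * Bv :=
    le_trans (Matrix.frobenius_norm_mul X₂ Wv)
      (mul_le_mul hX₂ hWv (norm_nonneg _) hBx0)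
  -- bound on ‖S₁‖
  have hS₁n : ‖S₁‖ ≤ c * (Bx * Bq * (Bx * Bk)) := by
    rw [hS₁, frob_smul, abs_of_nonneg hc0]
    apply mul_le_mul_of_nonneg_left _ hc0
    calc ‖X₁ * Wq * (X₁ * Wk)ᵀ‖ ≤ ‖X₁ * Wq‖ * ‖(X₁ * Wk)ᵀ‖ :=
          Matrix.frobenius_norm_mul _ _
      _ = ‖X₁ * Wq‖ * ‖X₁ * Wk‖ := by rw [Matrix.frobenius_norm_transpose]
      _ ≤ Bx * Bq * (Bx * Bk) :=
          mul_le_mul hX₁Wq hX₁Wk (norm_nonneg _) (by positivity)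
  -- bound on ‖S₁ - S₂‖
  have hS₁₂ : ‖S₁ - S₂‖ ≤ c * (2 * Bx * Bq * Bk * ‖Δ‖) := by
    have hid : S₁ - S₂ = c • ((Δ * Wq) * (X₁ * Wk)ᵀ + (X₂ * Wq) * (Δ * Wk)ᵀ) := by
      rw [hS₁, hS₂, ← smul_sub]
      congr 1
      simp only [hΔ, Matrix.sub_mul, Matrix.transpose_sub, Matrix.mul_sub]
      abel
    rw [hid, frob_smul, abs_of_nonneg hc0]
    apply mul_le_mul_of_nonneg_left _ hc0
    calc ‖(Δ * Wq) * (X₁ * Wk)ᵀ + (X₂ * Wq) * (Δ * Wk)ᵀ‖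
        ≤ ‖(Δ * Wq) * (X₁ * Wk)ᵀ‖ + ‖(X₂ * Wq) * (Δ * Wk)ᵀ‖ := norm_add_le _ _
      _ ≤ ‖Δ * Wq‖ * ‖(X₁ * Wk)ᵀ‖ + ‖X₂ * Wq‖ * ‖(Δ * Wk)ᵀ‖ :=
          add_le_add (Matrix.frobenius_norm_mul _ _) (Matrix.frobenius_norm_mul _ _)
      _ = ‖Δ * Wq‖ * ‖X₁ * Wk‖ + ‖X₂ * Wq‖ * ‖Δ * Wk‖ := by
          rw [Matrix.frobenius_norm_transpose, Matrix.frobenius_norm_transpose]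
      _ ≤ (‖Δ‖ * Bq) * (Bx * Bk) + (Bx * Bq) * (‖Δ‖ * Bk) :=
          add_le_add (mul_le_mul hΔWq hX₁Wk (norm_nonneg _) (by positivity))
            (mul_le_mul hX₂Wq hΔWk (norm_nonneg _) (by positivity))
      _ = 2 * Bx * Bq * Bk * ‖Δ‖ := by ring
  -- softmax Lipschitz bounds
  have hP₁U : ‖P₁ - U‖ ≤ 1 / 2 * ‖S₁‖ := by
    have h := softmaxRows_lip S₁ (0 : Matrix (Fin n) (Fin n) ℝ)
    simpa using h
  have hP₁₂ : ‖P₁ - P₂‖ ≤ 1 / 2 * ‖S₁ - S₂‖ := softmaxRows_lip S₁ S₂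
  -- assemble
  rw [hdecomp]
  have hfinal : ‖U * (Δ * Wv) + ((P₁ - U) * (Δ * Wv) + (P₁ - P₂) * (X₂ * Wv))‖
      ≤ ‖Δ‖ * Bv + ((1 / 2 * (c * (Bx * Bq * (Bx * Bk)))) * (‖Δ‖ * Bv)
        + (1 / 2 * (c * (2 * Bx * Bq * Bk * ‖Δ‖))) * (Bx * Bv)) := by
    refine le_trans (norm_add_le _ _) (add_le_add ?_ (le_trans (norm_add_le _ _)
      (add_le_add ?_ ?_)))
    · exact le_trans (uniform_mul _) hΔWv
    · refine le_trans (Matrix.frobenius_norm_mul _ _) ?_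
      exact mul_le_mul (le_trans hP₁U (by nlinarith)) hΔWv (norm_nonneg _) (by positivity)
    · refine le_trans (Matrix.frobenius_norm_mul _ _) ?_
      exact mul_le_mul (le_trans hP₁₂ (by nlinarith)) hX₂Wv (norm_nonneg _) (by positivity)
  refine le_trans hfinal ?_
  have hrw : Bx * Bv * (2 * Bx * Bq * Bk) / Real.sqrt dk
      = Bx * Bv * (2 * Bx * Bq * Bk) * c := by
    rw [hc, div_eq_mul_inv]
  rw [hrw]
  have hprod : 0 ≤ c * Bx * Bx * Bq * Bk * (Bv * ‖Δ‖) := by positivity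
  nlinarith [hprod]
end
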